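/- Let 𝕃 be the Loewner matrix with entries 𝕃_{ji} = (v_j^⊤ r_i − l_j^⊤ w_i)/(β_j − α_i), where w_i = W(α_i) r_i, v_j^⊤ = l_j^⊤ W(β_j), and W(s) = C(Ms² + Ds + K)^{-1}B. Let X have columns X_i = (M α_i² + D α_i + K)^{-1} B r_i and Y have rows Y_j = l_j^⊤ C (M β_j² + D β_j + K)^{-1}. Then 𝕃 = −Λ_β Y M X − Y M X Λ_α − Y D X, where Λ_α = diag(α_i), Λ_β = diag(β_j), assuming all α_i, β_j lie outside the pole set and β_j ≠ α_i for all i, j. -/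

import Mathlib

open Matrix

/-- The second-order Loewner matrix factors as
𝕃 = −Λ_β Y M X − Y M X Λ_α − Y D X. -/
theorem loewner_factorization
    {n p q ν : ℕ} (M D K : Matrix (Fin n) (Fin n) ℂ)
    (B : Matrix (Fin n) (Fin p) ℂ) (C : Matrix (Fin q) (Fin n) ℂ)
    (α β : Fin ν → ℂ) (r : Fin ν → Fin p → ℂ) (l : Fin ν → Fin q → ℂ)
    (w : Fin ν → Fin q → ℂ) (v : Fin ν → Fin p → ℂ)
    (hαdet : ∀ i, ((α i) ^ 2 • M + (α i) • D + K).det ≠ 0)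
    (hβdet : ∀ j, ((β j) ^ 2 • M + (β j) • D + K).det ≠ 0)
    (hαβ : ∀ i j, β j ≠ α i)
    (hw : ∀ i, w i = (C * ((α i) ^ 2 • M + (α i) • D + K)⁻¹ * B) *ᵥ r i)
    (hv : ∀ j, v j = l j ᵥ* (C * ((β j) ^ 2 • M + (β j) • D + K)⁻¹ * B))
    (X : Matrix (Fin n) (Fin ν) ℂ)
    (hX : X = Matrix.of fun a i => ((((α i) ^ 2 • M + (α i) • D + K)⁻¹ * B) *ᵥ r i) a)
    (Y : Matrix (Fin ν) (Fin n) ℂ)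
    (hY : Y = Matrix.of fun j b => (l j ᵥ* (C * ((β j) ^ 2 • M + (β j) • D + K)⁻¹)) b)
    (𝕃 : Matrix (Fin ν) (Fin ν) ℂ)
    (h𝕃 : 𝕃 = Matrix.of fun j i => (v j ⬝ᵥ r i - l j ⬝ᵥ w i) / (β j - α i)) :
    𝕃 = -(Matrix.diagonal β * Y * M * X) - Y * M * X * Matrix.diagonal α - Y * D * X := by
  set Pa : Fin ν → Matrix (Fin n) (Fin n) ℂ :=
    fun i => (α i) ^ 2 • M + (α i) • D + K with hPa
  set Pb : Fin ν → Matrix (Fin n) (Fin n) ℂ :=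
    fun j => (β j) ^ 2 • M + (β j) • D + K with hPb
  set x : Fin ν → Fin n → ℂ := fun i => ((Pa i)⁻¹ * B) *ᵥ r i with hx
  set y : Fin ν → Fin n → ℂ := fun j => l j ᵥ* (C * (Pb j)⁻¹) with hy
  have hXe : ∀ a i, X a i = x i a := by intro a i; rw [hX]; rfl
  have hYe : ∀ j b, Y j b = y j b := by intro j b; rw [hY]; rfl
  have hent : ∀ (A : Matrix (Fin n) (Fin n) ℂ) j i,
      (Y * A * X) j i = y j ⬝ᵥ (A *ᵥ x i) := by
    intro A j i
    rw [Matrix.mul_assoc, Matrix.mul_apply]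
    simp only [dotProduct, mulVec, Matrix.mul_apply, dotProduct, hXe, hYe]
  ext j i
  rw [h𝕃]
  have hnum1 : v j ⬝ᵥ r i = y j ⬝ᵥ ((Pa i) *ᵥ x i) := by
    have h1 : (Pa i) *ᵥ x i = B *ᵥ r i := by
      rw [hx]
      simp only [Matrix.mulVec_mulVec, ← Matrix.mul_assoc,
        Matrix.mul_nonsing_inv (Pa i) (Ne.isUnit (hαdet i)), Matrix.one_mul]
    rw [h1, hv, Matrix.dotProduct_mulVec, ← Matrix.vecMul_vecMul]
  have h2 : y j ᵥ* (Pb j) = l j ᵥ* C := by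
    rw [hy, Matrix.vecMul_vecMul, Matrix.mul_assoc,
      Matrix.nonsing_inv_mul (Pb j) (Ne.isUnit (hβdet j)), Matrix.mul_one]
  have hnum2 : l j ⬝ᵥ w i = y j ⬝ᵥ ((Pb j) *ᵥ x i) :=
    calc l j ⬝ᵥ w i = l j ⬝ᵥ (C *ᵥ x i) := by
          rw [hw, hx]
          simp only [Matrix.mulVec_mulVec, Matrix.mul_assoc]
          rfl
      _ = (l j ᵥ* C) ⬝ᵥ x i := Matrix.dotProduct_mulVec _ _ _
      _ = (y j ᵥ* Pb j) ⬝ᵥ x i := by rw [h2]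
      _ = y j ⬝ᵥ ((Pb j) *ᵥ x i) := (Matrix.dotProduct_mulVec _ _ _).symm
  have key : v j ⬝ᵥ r i - l j ⬝ᵥ w i
      = ((α i)^2 - (β j)^2) * (y j ⬝ᵥ (M *ᵥ x i))
        + (α i - β j) * (y j ⬝ᵥ (D *ᵥ x i)) := by
    rw [hnum1, hnum2, ← dotProduct_sub, ← Matrix.sub_mulVec]
    have h3 : Pa i - Pb j = ((α i)^2 - (β j)^2) • M + (α i - β j) • D := by
      simp only [hPa, hPb, sub_smul]
      abel
    rw [h3, Matrix.add_mulVec, Matrix.smul_mulVec, Matrix.smul_mulVec,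
      dotProduct_add, dotProduct_smul, dotProduct_smul]
    simp [smul_eq_mul]
  have hβm : (Matrix.diagonal β * Y * M * X) j i = β j * (y j ⬝ᵥ (M *ᵥ x i)) := by
    rw [show Matrix.diagonal β * Y * M * X = Matrix.diagonal β * (Y * M * X) by
          simp only [Matrix.mul_assoc],
        Matrix.diagonal_mul, hent M j i]
  have hαm : (Y * M * X * Matrix.diagonal α) j i = (y j ⬝ᵥ (M *ᵥ x i)) * α i := by
    rw [Matrix.mul_diagonal, hent M j i]
  have hne : β j - α i ≠ 0 := sub_ne_zero.mpr (hαβ i j)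
  show (v j ⬝ᵥ r i - l j ⬝ᵥ w i) / (β j - α i) = _
  simp only [Matrix.sub_apply, Matrix.neg_apply]
  rw [hβm, hαm, hent D j i, key]
  field_simp
  ring
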